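/- Let N = rs + r − 1 and let K = [N] be partitioned into s disjoint r-blocks and an (r−1)-set. Then the complete r-graph on K satisfies C(N, r) = Σ_{τ ∈ ([s] choose r)} Σ_{T ⊆ V_τ, |T| = r} 1 / C(s − z(T), r − z(T)), where V_τ is the union of the residual (r−1)-set with the blocks indexed by τ and z(T) is the number of blocks met by T. -/
import Mathlib

open Finset

lemma count_supersets {α : Type*} [DecidableEq α] (u Z : Finset α) (hZ : Z ⊆ u) (k : ℕ)
    (hk : Z.card ≤ k) :
    ((powersetCard k u).filter (fun τ => Z ⊆ τ)).card
      = (u.card - Z.card).choose (k - Z.card) := by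
  rw [← card_sdiff_of_subset hZ, ← card_powersetCard]
  apply card_bij' (fun τ _ => τ \ Z) (fun σ _ => σ ∪ Z)
  · intro τ hτ
    simp only [mem_filter, mem_powersetCard] at hτ ⊢
    obtain ⟨⟨h1, h2⟩, h3⟩ := hτ
    exact ⟨sdiff_subset_sdiff h1 le_rfl, by rw [card_sdiff_of_subset h3, h2]⟩
  · intro σ hσ
    simp only [mem_filter, mem_powersetCard] at hσ ⊢
    obtain ⟨h1, h2⟩ := hσ
    have hdisj : Disjoint σ Z := disjoint_of_subset_left h1 sdiff_disjoint
    refine ⟨⟨union_subset (h1.trans (sdiff_subset)) hZ, ?_⟩, subset_union_right⟩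
    rw [card_union_of_disjoint hdisj, h2]
    omega
  · intro τ hτ
    simp only [mem_filter, mem_powersetCard] at hτ
    rw [sdiff_union_of_subset hτ.2]
  · intro σ hσ
    simp only [mem_powersetCard] at hσ
    exact union_sdiff_cancel_right (disjoint_of_subset_left hσ.1 sdiff_disjoint)

/-- Double-counting identity for the complete `r`-graph on `K = [rs+r−1]`, partitioned into `s`
disjoint `r`-blocks `E i` and a residual `(r−1)`-set `D`:
`C(rs+r−1, r) = Σ_τ Σ_{T ⊆ V_τ, |T| = r} 1 / C(s − z(T), r − z(T))`. -/
theorem stmt10 (r s : ℕ) (hr : 2 ≤ r) (hs : r ≤ s)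
    (E : Fin s → Finset ℕ) (D : Finset ℕ)
    (hEcard : ∀ i, (E i).card = r) (hD : D.card = r - 1)
    (hdisj : ∀ i j, i ≠ j → Disjoint (E i) (E j))
    (hDdisj : ∀ i, Disjoint D (E i)) :
    (Nat.choose (r * s + r - 1) r : ℚ) =
      ∑ τ ∈ Finset.powersetCard r (Finset.univ : Finset (Fin s)),
        ∑ T ∈ Finset.powersetCard r (D ∪ τ.biUnion E),
          (1 : ℚ) /
            Nat.choose (s - (Finset.univ.filter fun i => (T ∩ E i).Nonempty).card)
              (r - (Finset.univ.filter fun i => (T ∩ E i).Nonempty).card) := by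
  classical
  set K : Finset ℕ := D ∪ (univ : Finset (Fin s)).biUnion E with hK
  set Z : Finset ℕ → Finset (Fin s) :=
    fun T => univ.filter fun i => (T ∩ E i).Nonempty with hZdef
  set w : Finset ℕ → ℚ :=
    fun T => 1 / Nat.choose (s - (Z T).card) (r - (Z T).card) with hwdef
  have hKcard : K.card = r * s + r - 1 := by
    rw [hK, card_union_of_disjoint, card_biUnion (fun i _ j _ hij => hdisj i j hij)]
    · simp only [hEcard, sum_const, card_univ, Fintype.card_fin, smul_eq_mul, hD]
      have := mul_comm s r
      omega
    · rw [disjoint_biUnion_right]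
      exact fun i _ => hDdisj i
  -- z(T) ≤ card T for T ⊆ K
  have hzle : ∀ T : Finset ℕ, (Z T).card ≤ T.card := by
    intro T
    have hsub : (Z T).biUnion (fun i => T ∩ E i) ⊆ T := by
      intro x hx
      simp only [mem_biUnion] at hx
      obtain ⟨i, _, hx⟩ := hx
      exact (mem_inter.1 hx).1
    calc (Z T).card = ∑ i ∈ Z T, 1 := by simp
      _ ≤ ∑ i ∈ Z T, (T ∩ E i).card := by
          apply sum_le_sum
          intro i hi
          simp only [hZdef, mem_filter] at hi
          exact card_pos.2 hi.2
      _ = ((Z T).biUnion (fun i => T ∩ E i)).card := by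
          rw [card_biUnion]
          intro i _ j _ hij
          exact disjoint_of_subset_left inter_subset_right
            (disjoint_of_subset_right inter_subset_right (hdisj i j hij))
      _ ≤ T.card := card_le_card hsub
  -- key: for T ⊆ K, T ⊆ V_τ ↔ Z T ⊆ τ
  have hkey : ∀ T : Finset ℕ, T ⊆ K → ∀ τ : Finset (Fin s),
      (T ⊆ D ∪ τ.biUnion E ↔ Z T ⊆ τ) := by
    intro T hTK τ
    constructor
    · intro h i hi
      simp only [hZdef, mem_filter] at hi
      obtain ⟨x, hx⟩ := hi.2
      have hxE : x ∈ E i := (mem_inter.1 hx).2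
      have hxT : x ∈ T := (mem_inter.1 hx).1
      have := h hxT
      simp only [mem_union, mem_biUnion] at this
      rcases this with hxD | ⟨j, hj, hxj⟩
      · exact absurd hxE (disjoint_left.1 (hDdisj i) hxD)
      · rcases eq_or_ne j i with rfl | hne
        · exact hj
        · exact absurd hxE (disjoint_left.1 (hdisj j i hne) hxj)
    · intro h x hx
      have := hTK hx
      simp only [hK, mem_union, mem_biUnion] at this
      rcases this with hxD | ⟨i, _, hxi⟩
      · exact mem_union_left _ hxD
      · have hiZ : i ∈ Z T := by
          simp only [hZdef, mem_filter]
          exact ⟨mem_univ i, ⟨x, mem_inter.2 ⟨hx, hxi⟩⟩⟩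
        exact mem_union_right _ (mem_biUnion.2 ⟨i, h hiZ, hxi⟩)
  have step1 : ∀ τ ∈ powersetCard r (univ : Finset (Fin s)),
      ∑ T ∈ powersetCard r (D ∪ τ.biUnion E), w T
        = ∑ T ∈ powersetCard r K, if Z T ⊆ τ then w T else 0 := by
    intro τ hτ
    rw [← sum_filter]
    apply sum_congr _ (fun _ _ => rfl)
    ext T
    simp only [mem_filter, mem_powersetCard]
    constructor
    · intro ⟨h1, h2⟩
      have hVK : D ∪ τ.biUnion E ⊆ K := by
        apply union_subset subset_union_left
        exact (biUnion_subset_biUnion_of_subset_left E (subset_univ τ)).trans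
          subset_union_right
      refine ⟨⟨h1.trans hVK, h2⟩, (hkey T (h1.trans hVK) τ).1 h1⟩
    · intro ⟨⟨h1, h2⟩, h3⟩
      exact ⟨(hkey T h1 τ).2 h3, h2⟩
  calc (Nat.choose (r * s + r - 1) r : ℚ)
      = ∑ T ∈ powersetCard r K, (1 : ℚ) := by
        rw [sum_const, card_powersetCard, hKcard, nsmul_eq_mul, mul_one]
    _ = ∑ T ∈ powersetCard r K,
          ∑ τ ∈ powersetCard r (univ : Finset (Fin s)), if Z T ⊆ τ then w T else 0 := by
        apply sum_congr rfl
        intro T hT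
        simp only [mem_powersetCard] at hT
        have hZsub : Z T ⊆ univ := subset_univ _
        have hzr : (Z T).card ≤ r := hT.2 ▸ hzle T
        have hcount := count_supersets (univ : Finset (Fin s)) (Z T) hZsub r hzr
        rw [← sum_filter, sum_const, hcount, card_univ, Fintype.card_fin,
          nsmul_eq_mul, hwdef]
        have hpos : 0 < (s - (Z T).card).choose (r - (Z T).card) :=
          Nat.choose_pos (by omega)
        field_simp
    _ = ∑ τ ∈ powersetCard r (univ : Finset (Fin s)),
          ∑ T ∈ powersetCard r K, if Z T ⊆ τ then w T else 0 := sum_comm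
    _ = _ := by
        apply sum_congr rfl
        intro τ hτ
        rw [← step1 τ hτ]
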